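/- Let (T,d) be a compact metric space, m a Borel probability measure on T, φ a Young function with φ(1)=1, and R > 2. Then for every bounded Borel function f : T → ℝ, all integers 0 ≤ k ≤ l, and every x ∈ T: S_l S_{l-1} ⋯ S_k |f| (x) ≤ φ(R^k) ∫_{B^l_k(x)} |f(u)| m(du). -/

import Mathlib

open MeasureTheory ENNReal Filter

noncomputable section

/-- A (finite) Young function: an increasing convex function `φ : [0,∞) → [0,∞)`
with `φ 0 = 0` and `φ x → ∞` as `x → ∞`. -/
def IsYoungFunction (φ : ℝ → ℝ) : Prop :=
  MonotoneOn φ (Set.Ici 0) ∧ ConvexOn ℝ (Set.Ici 0) φ ∧ φ 0 = 0 ∧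
    Tendsto φ atTop atTop

/-- Generalized inverse of a Young function, as a map `ℝ≥0∞ → ℝ≥0∞`
(so that in particular `φ⁻¹(∞) = ∞`). -/
def yinv (φ : ℝ → ℝ) (y : ℝ≥0∞) : ℝ≥0∞ :=
  sInf {x : ℝ≥0∞ | ∃ r : ℝ, 0 ≤ r ∧ x = ENNReal.ofReal r ∧ y ≤ ENNReal.ofReal (φ r)}

/-- The minorizing metric
`τ_{m,φ}(s,t) = max_{x ∈ {s,t}} ∫_0^{d(s,t)} φ⁻¹(1 / m(B(x,ε))) dε`,
with the conventions `1/0 = ∞`, `φ⁻¹(∞) = ∞`. -/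
def tauDist {T : Type*} [MetricSpace T] [MeasurableSpace T]
    (m : Measure T) (φ : ℝ → ℝ) (s t : T) : ℝ≥0∞ :=
  max (∫⁻ ε in Set.Ioc (0 : ℝ) (dist s t), yinv φ (1 / m (Metric.closedBall s ε)))
    (∫⁻ ε in Set.Ioc (0 : ℝ) (dist s t), yinv φ (1 / m (Metric.closedBall t ε)))

/-- `f^d(u,v) = |f(u) - f(v)| / d(u,v)`, equal to `0` on the diagonal. -/
def fdiv {T : Type*} [MetricSpace T] (f : T → ℝ) (p : T × T) : ℝ :=
  |f p.1 - f p.2| / dist p.1 p.2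

/-- The Luxemburg norm `|g|^ν_χ = inf {a > 0 : ∫ χ(|g|/a) dν ≤ 1}`, with value `∞`
if no such `a` exists. -/
def luxNorm {X : Type*} [MeasurableSpace X] (ν : Measure X) (χ : ℝ → ℝ)
    (g : X → ℝ) : ℝ≥0∞ :=
  sInf {a : ℝ≥0∞ | ∃ b : ℝ, 0 < b ∧ a = ENNReal.ofReal b ∧
    ∫⁻ u, ENNReal.ofReal (χ (|g u| / b)) ∂ν ≤ 1}

/-- The Amemiya norm `‖g‖^μ_χ = inf_{a>0} a (1 + ∫ χ(|g|/a) dμ)`. -/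
def amemiyaNorm {X : Type*} [MeasurableSpace X] (μ : Measure X) (χ : ℝ → ℝ)
    (g : X → ℝ) : ℝ≥0∞ :=
  sInf {c : ℝ≥0∞ | ∃ a : ℝ, 0 < a ∧
    c = ENNReal.ofReal a * (1 + ∫⁻ u, ENNReal.ofReal (χ (|g u| / a)) ∂μ)}

/-- `r_0(x) = D(T)` and, for `k ≥ 1`,
`r_k(x) = min {ε ≥ 0 : 1 / m(B(x,ε)) ≤ φ(R^k)}` (with `1/0 = ∞`). -/
def rad {T : Type*} [MetricSpace T] [MeasurableSpace T]
    (m : Measure T) (φ : ℝ → ℝ) (R : ℝ) : ℕ → T → ℝ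
  | 0, _ => Metric.diam (Set.univ : Set T)
  | k + 1, x => sInf {ε : ℝ | 0 ≤ ε ∧
      1 / m (Metric.closedBall x ε) ≤ ENNReal.ofReal (φ (R ^ (k + 1)))}

/-- `r^l_k(x) = ∑_{i=k}^{l} 2^(i-k) r_i(x)`. -/
def radl {T : Type*} [MetricSpace T] [MeasurableSpace T]
    (m : Measure T) (φ : ℝ → ℝ) (R : ℝ) (k l : ℕ) (x : T) : ℝ :=
  ∑ i ∈ Finset.Icc k l, (2 : ℝ) ^ (i - k) * rad m φ R i x

/-- The averaging operator `S_k f (x) = (1 / m(B_k(x))) ∫_{B_k(x)} f dm`,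
with the convention `0/0 = 0`. -/
def avg {T : Type*} [MetricSpace T] [MeasurableSpace T]
    (m : Measure T) (φ : ℝ → ℝ) (R : ℝ) (k : ℕ) (f : T → ℝ) (x : T) : ℝ :=
  (∫ u in Metric.closedBall x (rad m φ R k x), f u ∂m) /
    (m (Metric.closedBall x (rad m φ R k x))).toReal

/-- The iterated averaging operator `iterAvg k l f = S_l S_{l-1} ⋯ S_k f` (for `k ≤ l`). -/
def iterAvg {T : Type*} [MetricSpace T] [MeasurableSpace T]
    (m : Measure T) (φ : ℝ → ℝ) (R : ℝ) (k : ℕ) : ℕ → (T → ℝ) → T → ℝ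
  | 0, f => avg m φ R 0 f
  | l + 1, f =>
      if l + 1 ≤ k then avg m φ R (l + 1) f
      else avg m φ R (l + 1) (iterAvg m φ R k l f)

/-- The set `{k ≥ 1 : B^l_k(s) ∪ B^l_k(t) ⊆ B°(u, r_{k-1}(u)) for every u ∈ B^l_k(x)}`,
whose greatest element is `τ_x`. -/
def tauSet {T : Type*} [MetricSpace T] [MeasurableSpace T]
    (m : Measure T) (φ : ℝ → ℝ) (R : ℝ) (l : ℕ) (s t x : T) : Set ℕ :=
  {k : ℕ | 1 ≤ k ∧ ∀ u ∈ Metric.closedBall x (radl m φ R k l x),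
    Metric.closedBall s (radl m φ R k l s) ∪ Metric.closedBall t (radl m φ R k l t) ⊆
      Metric.ball u (rad m φ R (k - 1) u)}

section Aux

variable {T : Type} [MetricSpace T] [CompactSpace T] [MeasurableSpace T] [BorelSpace T]

lemma phi_one_le {φ : ℝ → ℝ} (hφ : IsYoungFunction φ) (hφ1 : φ 1 = 1)
    {R : ℝ} (hR : 2 < R) (k : ℕ) : 1 ≤ φ (R ^ k) := by
  have h1 : (1:ℝ) ≤ R ^ k := one_le_pow₀ (by linarith)
  have h2 := hφ.1 (Set.mem_Ici.mpr (by norm_num)) (Set.mem_Ici.mpr (by linarith)) h1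
  linarith [hφ1 ▸ h2]

lemma closedBall_diam (x : T) :
    Metric.closedBall x (Metric.diam (Set.univ : Set T)) = Set.univ := by
  ext y
  simp only [Metric.mem_closedBall, Set.mem_univ, iff_true]
  exact Metric.dist_le_diam_of_mem isCompact_univ.isBounded trivial trivial

lemma rad_mem (m : Measure T) [IsProbabilityMeasure m]
    {φ : ℝ → ℝ} (hφ : IsYoungFunction φ) (hφ1 : φ 1 = 1)
    {R : ℝ} (hR : 2 < R) (k : ℕ) (x : T) :
    0 ≤ rad m φ R k x ∧
      (ENNReal.ofReal (φ (R ^ k)))⁻¹ ≤ m (Metric.closedBall x (rad m φ R k x)) := by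
  have hφk : 1 ≤ φ (R ^ k) := phi_one_le hφ hφ1 hR k
  have hofk : (1:ℝ≥0∞) ≤ ENNReal.ofReal (φ (R ^ k)) := ENNReal.one_le_ofReal.mpr hφk
  cases k with
  | zero =>
    constructor
    · exact Metric.diam_nonneg
    · show _ ≤ m (Metric.closedBall x (Metric.diam (Set.univ : Set T)))
      rw [closedBall_diam, measure_univ]
      exact ENNReal.inv_le_one.mpr hofk
  | succ k =>
    set S := {ε : ℝ | 0 ≤ ε ∧
        1 / m (Metric.closedBall x ε) ≤ ENNReal.ofReal (φ (R ^ (k + 1)))} with hS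
    have hne : Metric.diam (Set.univ : Set T) ∈ S := by
      refine ⟨Metric.diam_nonneg, ?_⟩
      rw [closedBall_diam, measure_univ]
      simpa using hofk
    have hbdd : BddBelow S := ⟨0, fun ε hε => hε.1⟩
    have hr : rad m φ R (k+1) x = sInf S := rfl
    have h0 : 0 ≤ sInf S := le_csInf ⟨_, hne⟩ (fun ε hε => hε.1)
    refine ⟨hr ▸ h0, ?_⟩
    rw [hr]
    set r := sInf S with hrdef
    have hinter : Metric.closedBall x r = ⋂ n : ℕ, Metric.closedBall x (r + 1/(n+1)) := by
      ext y
      simp only [Metric.mem_closedBall, Set.mem_iInter]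
      constructor
      · intro h n
        have : (0:ℝ) < 1/(n+1) := by positivity
        linarith
      · intro h
        by_contra hc
        push_neg at hc
        obtain ⟨n, hn⟩ := exists_nat_one_div_lt (show (0:ℝ) < dist y x - r by linarith)
        have := h n
        linarith
    have key : ∀ n : ℕ, (ENNReal.ofReal (φ (R ^ (k+1))))⁻¹ ≤
        m (Metric.closedBall x (r + 1/(n+1))) := by
      intro n
      have hlt : sInf S < r + 1/(n+1) := by
        have : (0:ℝ) < 1/(n+1) := by positivity
        rw [← hrdef]; linarith
      obtain ⟨ε, hεS, hε⟩ := exists_lt_of_csInf_lt ⟨_, hne⟩ hlt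
      have h1 : (ENNReal.ofReal (φ (R ^ (k+1))))⁻¹ ≤ m (Metric.closedBall x ε) := by
        have := hεS.2
        rw [one_div] at this
        exact ENNReal.inv_le_iff_inv_le.mp this
      exact h1.trans (measure_mono (Metric.closedBall_subset_closedBall (le_of_lt hε)))
    rw [hinter]
    have := Directed.measure_iInter
      (μ := m) (s := fun n : ℕ => Metric.closedBall x (r + 1/(n+1)))
      (fun n => (Metric.isClosed_closedBall.measurableSet).nullMeasurableSet)
      ?_ ⟨0, measure_ne_top m _⟩
    · rw [this]
      exact le_iInf key
    · intro a b
      rcases le_total a b with h | h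
      · refine ⟨b, ?_, subset_rfl⟩
        apply Metric.closedBall_subset_closedBall
        have : (1:ℝ)/(b+1) ≤ 1/(a+1) := by
          apply one_div_le_one_div_of_le (by positivity)
          exact_mod_cast by omega
        linarith
      · refine ⟨a, subset_rfl, ?_⟩
        apply Metric.closedBall_subset_closedBall
        have : (1:ℝ)/(a+1) ≤ 1/(b+1) := by
          apply one_div_le_one_div_of_le (by positivity)
          exact_mod_cast by omega
        linarith

lemma rad_nonneg (m : Measure T) [IsProbabilityMeasure m]
    {φ : ℝ → ℝ} (hφ : IsYoungFunction φ) (hφ1 : φ 1 = 1)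
    {R : ℝ} (hR : 2 < R) (k : ℕ) (x : T) : 0 ≤ rad m φ R k x :=
  (rad_mem m hφ hφ1 hR k x).1

lemma rad_translate (m : Measure T) [IsProbabilityMeasure m]
    {φ : ℝ → ℝ} (hφ : IsYoungFunction φ) (hφ1 : φ 1 = 1)
    {R : ℝ} (hR : 2 < R) (k : ℕ) (x u : T) :
    rad m φ R k u ≤ rad m φ R k x + dist u x := by
  cases k with
  | zero =>
    show Metric.diam _ ≤ Metric.diam _ + dist u x
    exact le_add_of_nonneg_right dist_nonneg
  | succ k =>
    apply csInf_le ⟨0, fun ε hε => hε.1⟩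
    refine ⟨by have := rad_nonneg m hφ hφ1 hR (k+1) x; positivity, ?_⟩
    rw [one_div]
    apply ENNReal.inv_le_iff_inv_le.mpr
    refine le_trans (rad_mem m hφ hφ1 hR (k+1) x).2 (measure_mono ?_)
    exact Metric.closedBall_subset_closedBall' (by rw [dist_comm])

lemma radl_nonneg (m : Measure T) [IsProbabilityMeasure m]
    {φ : ℝ → ℝ} (hφ : IsYoungFunction φ) (hφ1 : φ 1 = 1)
    {R : ℝ} (hR : 2 < R) (k l : ℕ) (x : T) : 0 ≤ radl m φ R k l x := by
  apply Finset.sum_nonneg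
  intro i _
  have := rad_nonneg m hφ hφ1 hR i x
  positivity

lemma sumpow (k l : ℕ) (h : k ≤ l) :
    ∑ i ∈ Finset.Icc k l, (2:ℝ) ^ (i - k) = 2 ^ (l + 1 - k) - 1 := by
  induction l, h using Nat.le_induction with
  | base =>
    rw [Finset.Icc_self, Finset.sum_singleton]
    simp [Nat.sub_self, show k + 1 - k = 1 by omega]
    norm_num
  | succ l hl ih =>
    rw [Finset.sum_Icc_succ_top (Nat.le_succ_of_le hl), ih]
    have h1 : l + 1 + 1 - k = (l + 1 - k) + 1 := by omega
    rw [h1, pow_succ]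
    ring

lemma radl_translate (m : Measure T) [IsProbabilityMeasure m]
    {φ : ℝ → ℝ} (hφ : IsYoungFunction φ) (hφ1 : φ 1 = 1)
    {R : ℝ} (hR : 2 < R) {k l : ℕ} (hkl : k ≤ l) {x u : T}
    (hd : dist u x ≤ rad m φ R (l + 1) x) :
    radl m φ R k l u + dist u x ≤ radl m φ R k (l + 1) x := by
  have h1 : radl m φ R k l u ≤ radl m φ R k l x +
      (2 ^ (l + 1 - k) - 1) * dist u x := by
    rw [← sumpow k l hkl, Finset.sum_mul, radl, radl, ← Finset.sum_add_distrib]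
    apply Finset.sum_le_sum
    intro i _
    rw [← mul_add]
    have h2 : (0:ℝ) ≤ (2:ℝ) ^ (i - k) := by positivity
    exact mul_le_mul_of_nonneg_left (rad_translate m hφ hφ1 hR i x u) h2
  have h3 : radl m φ R k (l+1) x = radl m φ R k l x +
      2 ^ (l + 1 - k) * rad m φ R (l+1) x := by
    rw [radl, radl, Finset.sum_Icc_succ_top (Nat.le_succ_of_le hkl)]
  have h4 : (0:ℝ) < 2 ^ (l + 1 - k) := by positivity
  nlinarith [dist_nonneg (x := u) (y := x)]

lemma measure_rad_ball (m : Measure T) [IsProbabilityMeasure m]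
    {φ : ℝ → ℝ} (hφ : IsYoungFunction φ) (hφ1 : φ 1 = 1)
    {R : ℝ} (hR : 2 < R) (k : ℕ) (x : T) :
    1 ≤ φ (R ^ k) * (m (Metric.closedBall x (rad m φ R k x))).toReal := by
  have hφk : 1 ≤ φ (R ^ k) := phi_one_le hφ hφ1 hR k
  have h := (rad_mem m hφ hφ1 hR k x).2
  have htop : m (Metric.closedBall x (rad m φ R k x)) ≠ ⊤ := measure_ne_top m _
  have h2 : ((ENNReal.ofReal (φ (R ^ k)))⁻¹).toReal ≤
      (m (Metric.closedBall x (rad m φ R k x))).toReal :=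
    ENNReal.toReal_mono htop h
  rw [ENNReal.toReal_inv, ENNReal.toReal_ofReal (by linarith)] at h2
  have hφpos : (0:ℝ) < φ (R ^ k) := by linarith
  calc (1:ℝ) = φ (R ^ k) * (φ (R ^ k))⁻¹ := (mul_inv_cancel₀ (ne_of_gt hφpos)).symm
    _ ≤ _ := mul_le_mul_of_nonneg_left h2 (le_of_lt hφpos)

lemma measure_rad_ball_pos (m : Measure T) [IsProbabilityMeasure m]
    {φ : ℝ → ℝ} (hφ : IsYoungFunction φ) (hφ1 : φ 1 = 1)
    {R : ℝ} (hR : 2 < R) (k : ℕ) (x : T) :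
    0 < (m (Metric.closedBall x (rad m φ R k x))).toReal := by
  have h := measure_rad_ball m hφ hφ1 hR k x
  have hφk : 1 ≤ φ (R ^ k) := phi_one_le hφ hφ1 hR k
  nlinarith

lemma avg_nonneg' (m : Measure T) (φ : ℝ → ℝ) (R : ℝ) (k : ℕ)
    {f : T → ℝ} (hf : ∀ u, 0 ≤ f u) (x : T) : 0 ≤ avg m φ R k f x := by
  unfold avg
  apply div_nonneg _ ENNReal.toReal_nonneg
  exact MeasureTheory.integral_nonneg hf

lemma iterAvg_nonneg (m : Measure T) (φ : ℝ → ℝ) (R : ℝ) (k l : ℕ)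
    {f : T → ℝ} (hf : ∀ u, 0 ≤ f u) (x : T) : 0 ≤ iterAvg m φ R k l f x := by
  induction l generalizing x with
  | zero => exact avg_nonneg' m φ R 0 hf x
  | succ l ih =>
    unfold iterAvg
    split
    · exact avg_nonneg' m φ R (l+1) hf x
    · exact avg_nonneg' m φ R (l+1) (fun u => ih u) x

lemma iterAvg_self (m : Measure T) (φ : ℝ → ℝ) (R : ℝ) (k : ℕ) (f : T → ℝ) :
    iterAvg m φ R k k f = avg m φ R k f := by
  cases k with
  | zero => rfl
  | succ j => unfold iterAvg; simp

end Aux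

/-- Corollary 3 of the paper. -/
theorem statement15 (T : Type) [MetricSpace T] [CompactSpace T]
    [MeasurableSpace T] [BorelSpace T]
    (m : Measure T) (hm : IsProbabilityMeasure m)
    (φ : ℝ → ℝ) (hφ : IsYoungFunction φ) (hφ1 : φ 1 = 1)
    (R : ℝ) (hR : 2 < R)
    (f : T → ℝ) (hf : Measurable f) (hbd : ∃ C : ℝ, ∀ u : T, |f u| ≤ C)
    (k l : ℕ) (hkl : k ≤ l) (x : T) :
    iterAvg m φ R k l (fun u => |f u|) x ≤
      φ (R ^ k) * ∫ u in Metric.closedBall x (radl m φ R k l x), |f u| ∂m := by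
  haveI := hm
  obtain ⟨C, hC⟩ := hbd
  have hint : Integrable f m :=
    (MeasureTheory.integrable_const C).mono' hf.aestronglyMeasurable
      (Filter.Eventually.of_forall (fun u => by simpa using hC u))
  have hintabs : Integrable (fun u => |f u|) m := hint.abs
  have hφk : 1 ≤ φ (R ^ k) := phi_one_le hφ hφ1 hR k
  induction l, hkl using Nat.le_induction generalizing x with
  | base =>
    rw [iterAvg_self]
    have hrr : radl m φ R k k x = rad m φ R k x := by
      simp [radl, Finset.Icc_self]
    rw [hrr]
    unfold avg
    set I := ∫ u in Metric.closedBall x (rad m φ R k x), |f u| ∂m with hI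
    have hI0 : 0 ≤ I :=
      MeasureTheory.setIntegral_nonneg Metric.isClosed_closedBall.measurableSet
        (fun u _ => abs_nonneg _)
    have hM := measure_rad_ball m hφ hφ1 hR k x
    have hMpos := measure_rad_ball_pos m hφ hφ1 hR k x
    rw [div_le_iff₀ hMpos]
    nlinarith
  | succ l hl ih =>
    have hstep : iterAvg m φ R k (l+1) (fun u => |f u|) x
        = avg m φ R (l+1) (iterAvg m φ R k l (fun u => |f u|)) x := by
      rw [iterAvg, if_neg (by omega : ¬ (l + 1 ≤ k))]
    rw [hstep]
    set g := iterAvg m φ R k l (fun u => |f u|) with hg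
    set Cst := φ (R ^ k) *
      ∫ u in Metric.closedBall x (radl m φ R k (l+1) x), |f u| ∂m with hCst
    show avg m φ R (l+1) g x ≤ Cst
    have hInt' : 0 ≤ ∫ u in Metric.closedBall x (radl m φ R k (l+1) x), |f u| ∂m :=
      MeasureTheory.setIntegral_nonneg Metric.isClosed_closedBall.measurableSet
        (fun u _ => abs_nonneg _)
    have hC0 : 0 ≤ Cst := mul_nonneg (by linarith) hInt'
    have hbound : ∀ u ∈ Metric.closedBall x (rad m φ R (l+1) x), ‖g u‖ ≤ Cst := by
      intro u hu
      rw [Real.norm_eq_abs,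
        abs_of_nonneg (iterAvg_nonneg m φ R k l (fun v => abs_nonneg _) u)]
      refine (ih u).trans ?_
      apply mul_le_mul_of_nonneg_left _ (by linarith : (0:ℝ) ≤ φ (R ^ k))
      apply MeasureTheory.setIntegral_mono_set hintabs.integrableOn
        (Filter.Eventually.of_forall fun v => abs_nonneg _)
        (HasSubset.Subset.eventuallyLE ?_)
      exact Metric.closedBall_subset_closedBall'
        (radl_translate m hφ hφ1 hR hl (Metric.mem_closedBall.mp hu))
    unfold avg
    have hMpos := measure_rad_ball_pos m hφ hφ1 hR (l+1) x
    by_cases hmeas : AEStronglyMeasurable g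
        (m.restrict (Metric.closedBall x (rad m φ R (l+1) x)))
    · have hnorm := MeasureTheory.norm_setIntegral_le_of_norm_le_const
        (measure_lt_top m _) hbound
      rw [div_le_iff₀ hMpos]
      calc (∫ u in Metric.closedBall x (rad m φ R (l+1) x), g u ∂m)
          ≤ ‖∫ u in Metric.closedBall x (rad m φ R (l+1) x), g u ∂m‖ :=
            le_abs_self _
        _ ≤ Cst * (m (Metric.closedBall x (rad m φ R (l+1) x))).toReal := hnorm
    · rw [MeasureTheory.integral_non_aestronglyMeasurable hmeas, zero_div]
      exact hC0
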